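/- Suppose $k[x_1,\dots,x_n]$ carries a $\mathbb{Z}^r$-multigrading and $f \in k[x_1,\dots,x_n]$ is homogeneous for this multigrading. If $\mathrm{Tr}(f^{p-1}\cdot)$ is a Frobenius splitting of $k[x_1,\dots,x_n]$, then it is a multigraded splitting: for any monomial $m$ of multidegree $\mu$ with $\mathrm{Tr}(f^{p-1}m) \neq 0$, the multidegree $\mu$ is divisible by $p$ (and $\mathrm{Tr}(f^{p-1}m)$ has multidegree $\mu/p$). Consequently, every compatibly split ideal is homogeneous for the multigrading (i.e. torus-invariant). -/

import Mathlib

open MvPolynomial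

/-- The trace map `Tr` on `k[x₁,…,xₙ]` (see the standard Frobenius splitting). -/
noncomputable def Tr {k : Type*} [Field k] (p n : ℕ) [Fact p.Prime] [CharP k p]
    [PerfectRing k p] (f : MvPolynomial (Fin n) k) : MvPolynomial (Fin n) k :=
  ∑ d ∈ f.support,
    if ∀ i, p ∣ (d i + 1) then
      MvPolynomial.monomial
        (Finsupp.mapRange (fun m => (m + 1) / p - 1)
          (by simp [Nat.div_eq_of_lt (Fact.out : p.Prime).one_lt]) d)
        ((frobeniusEquiv k p).symm (f.coeff d))
    else 0

/-- The multidegree of an exponent vector `d` for the `ℤʳ`-multigrading with variable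
weights `w`. -/
def wdeg {n r : ℕ} (w : Fin n → Fin r → ℤ) (d : Fin n →₀ ℕ) : Fin r → ℤ :=
  fun j => ∑ i, (d i : ℤ) * w i j

/-- If `f` is homogeneous for a `ℤʳ`-multigrading and `Tr(f^{p-1}·)` is a Frobenius
splitting, then the splitting is multigraded: whenever `Tr(f^{p-1}m) ≠ 0` for a monomial
`m` of multidegree `μ`, `p` divides `μ` and the result is homogeneous of multidegree
`μ/p`.  Consequently every compatibly split ideal is homogeneous for the multigrading. -/
theorem stmt_15 {k : Type*} [Field k] (p n r : ℕ) [Fact p.Prime] [CharP k p]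
    [PerfectRing k p]
    (w : Fin n → Fin r → ℤ)
    (f : MvPolynomial (Fin n) k) (δ : Fin r → ℤ)
    (hhomog : ∀ d ∈ f.support, wdeg w d = δ)
    (φ : MvPolynomial (Fin n) k → MvPolynomial (Fin n) k)
    (hφ : φ = fun g => Tr p n (f ^ (p - 1) * g))
    (hadd : ∀ a b, φ (a + b) = φ a + φ b)
    (hsemi : ∀ a b, φ (a ^ p * b) = a * φ b)
    (hone : φ 1 = 1) :
    (∀ (d : Fin n →₀ ℕ) (c : k), φ (monomial d c) ≠ 0 →
      (∀ j, (p : ℤ) ∣ wdeg w d j) ∧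
      ∀ e ∈ (φ (monomial d c)).support, ∀ j, wdeg w e j = wdeg w d j / (p : ℤ)) ∧
    (∀ I : Ideal (MvPolynomial (Fin n) k), (∀ g ∈ I, φ g ∈ I) →
      ∀ g ∈ I, ∀ μ : Fin r → ℤ,
        (∑ d ∈ g.support, if wdeg w d = μ then monomial d (g.coeff d) else 0) ∈ I) := by
  classical
  have hp : p.Prime := Fact.out
  have hp2 : 2 ≤ p := hp.two_le
  have hp0 : 0 < p := by omega
  have h1p : 1 ≤ p := by omega
  have hpz : (p : ℤ) ≠ 0 := by exact_mod_cast hp0.ne'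
  have hcast : ((p - 1 : ℕ) : ℤ) = (p : ℤ) - 1 := by
    rw [Nat.cast_sub h1p, Nat.cast_one]
  have wdeg_def : ∀ (d : Fin n →₀ ℕ) (j : Fin r), wdeg w d j = ∑ i, (d i : ℤ) * w i j :=
    fun d j => rfl
  have wdeg_add : ∀ (a b : Fin n →₀ ℕ) (j : Fin r),
      wdeg w (a + b) j = wdeg w a j + wdeg w b j := by
    intro a b j
    simp only [wdeg, Finsupp.add_apply, Nat.cast_add, add_mul]
    exact Finset.sum_add_distrib
  have mem_monomial : ∀ (d d' : Fin n →₀ ℕ) (c : k),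
      d' ∈ (monomial d c).support → d' = d := by
    intro d d' c h
    rw [mem_support_iff, coeff_monomial] at h
    by_contra hne
    rw [if_neg (fun hh => hne hh.symm)] at h
    exact h rfl
  have support_one : ∀ u : Fin n →₀ ℕ, u ∈ (1 : MvPolynomial (Fin n) k).support → u = 0 := by
    intro u hu
    rw [mem_support_iff, coeff_one] at hu
    by_contra hne
    rw [if_neg (fun hh => hne hh.symm)] at hu
    exact hu rfl
  -- powers of f are homogeneous
  have hfpow : ∀ m : ℕ, ∀ u ∈ (f ^ m).support, ∀ j, wdeg w u j = (m : ℤ) * δ j := by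
    intro m
    induction m with
    | zero =>
      intro u hu j
      rw [pow_zero] at hu
      rw [support_one u hu]
      simp [wdeg]
    | succ m ih =>
      intro u hu j
      rw [pow_succ] at hu
      obtain ⟨a, ha, b, hb, hab⟩ := Finset.mem_add.mp (support_mul _ _ hu)
      have h2 := congrFun (hhomog b hb) j
      rw [← hab, wdeg_add, ih a ha j, h2]
      push_cast
      ring
  -- helper lemmas about nonzero coefficients of ite / monomial
  have ite_ne : ∀ (P : Prop) (inst : Decidable P) (X : MvPolynomial (Fin n) k)
        (E : Fin n →₀ ℕ),
        coeff E (if P then X else 0) ≠ 0 → P ∧ coeff E X ≠ 0 := by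
    intro P inst X E h
    by_cases hP : P
    · exact ⟨hP, by rwa [if_pos hP] at h⟩
    · rw [if_neg hP] at h
      simp at h
  have ite_ne' : ∀ (P : Prop) (inst : Decidable P) (X : MvPolynomial (Fin n) k)
        (E : Fin n →₀ ℕ),
        coeff E (if P then 0 else X) ≠ 0 → ¬P ∧ coeff E X ≠ 0 := by
    intro P inst X E h
    by_cases hP : P
    · rw [if_pos hP] at h
      simp at h
    · exact ⟨hP, by rwa [if_neg hP] at h⟩
  have mono_ne : ∀ (S E : Fin n →₀ ℕ) (c' : k),
      coeff E (monomial S c') ≠ 0 → S = E := by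
    intro S E c' h
    by_contra hno
    rw [coeff_monomial, if_neg hno] at h
    exact h rfl
  -- support extraction from Tr
  have trE : ∀ (Q : MvPolynomial (Fin n) k) (E : Fin n →₀ ℕ), E ∈ (Tr p n Q).support →
      ∃ D ∈ Q.support, (∀ i, p ∣ D i + 1) ∧ ∀ i, E i = (D i + 1) / p - 1 := by
    intro Q E hE
    rw [mem_support_iff] at hE
    simp only [Tr, coeff_sum] at hE
    obtain ⟨D, hD, hne⟩ := Finset.exists_ne_zero_of_sum_ne_zero hE
    obtain ⟨hcond, h2⟩ := ite_ne _ _ _ _ hne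
    have hS := mono_ne _ _ _ h2
    refine ⟨D, hD, hcond, fun i => ?_⟩
    rw [← hS, Finsupp.mapRange_apply]
  -- arithmetic helper
  have hcond_eq : ∀ (D : Fin n →₀ ℕ), (∀ i, p ∣ D i + 1) →
      (∀ i, (D i + 1) / p - 1 = 0) → ∀ i, D i = p - 1 := by
    intro D h1 h2 i
    obtain ⟨t, ht⟩ := h1 i
    have h3 := h2 i
    rw [ht, Nat.mul_div_cancel_left t hp0] at h3
    rcases Nat.eq_zero_or_pos t with h0 | h0
    · rw [h0, Nat.mul_zero] at ht; omega
    · have ht1 : t = 1 := by omega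
      rw [ht1, Nat.mul_one] at ht; omega
  -- the all-(p-1) exponent vector
  set onevec : Fin n →₀ ℕ := Finsupp.equivFunOnFinite.symm (fun _ => p - 1) with honevec
  have onevecApp : ∀ i, onevec i = p - 1 := by
    intro i
    rw [honevec]
    exact rfl
  have hTr1 : Tr p n (f ^ (p - 1)) = 1 := by
    have h1 := hone
    rw [hφ] at h1
    simpa using h1
  have hD₀ : onevec ∈ (f ^ (p - 1)).support := by
    by_contra hcon
    have h0 : coeff (0 : Fin n →₀ ℕ) (Tr p n (f ^ (p - 1))) = 0 := by
      simp only [Tr, coeff_sum]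
      apply Finset.sum_eq_zero
      intro D hD
      by_contra hne0
      obtain ⟨hcond, h2⟩ := ite_ne _ _ _ _ hne0
      have hS := mono_ne _ _ _ h2
      have h3 : ∀ i, (D i + 1) / p - 1 = 0 := by
        intro i
        have h4 := DFunLike.congr_fun hS i
        rw [Finsupp.mapRange_apply] at h4
        simpa using h4
      have hDeq : D = onevec := by
        ext i
        rw [onevecApp i]
        exact hcond_eq D hcond h3 i
      exact hcon (hDeq ▸ hD)
    rw [hTr1] at h0
    rw [coeff_zero_one] at h0
    exact one_ne_zero h0
  -- δ is the total weight of all variables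
  have hδ : ∀ j, δ j = ∑ i, w i j := by
    intro j
    have h1 := hfpow (p - 1) onevec hD₀ j
    have h2 : wdeg w onevec j = ((p - 1 : ℕ) : ℤ) * ∑ i, w i j := by
      rw [wdeg_def, Finset.mul_sum]
      refine Finset.sum_congr rfl fun i _ => ?_
      rw [onevecApp i]
    rw [h1] at h2
    have hpne : ((p - 1 : ℕ) : ℤ) ≠ 0 := by
      rw [hcast]
      have : (2 : ℤ) ≤ (p : ℤ) := by exact_mod_cast hp2
      linarith
    exact mul_left_cancel₀ hpne h2
  -- THE KEY STEP: φ multiplies multidegrees by 1/p on monomials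
  have keyStep : ∀ (d : Fin n →₀ ℕ) (c : k) (E : Fin n →₀ ℕ),
      E ∈ (φ (monomial d c)).support → ∀ j, (p : ℤ) * wdeg w E j = wdeg w d j := by
    intro d c E hE j
    simp only [hφ] at hE
    obtain ⟨D, hD, hcond, hEi'⟩ := trE _ _ hE
    obtain ⟨u, hu, d', hd', hud⟩ := Finset.mem_add.mp (support_mul _ _ hD)
    have hd'd : d' = d := mem_monomial _ _ _ hd'
    rw [hd'd] at hud
    have hEi : ∀ i, (p : ℤ) * (E i : ℤ) = (D i : ℤ) + 1 - (p : ℤ) := by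
      intro i
      obtain ⟨t, ht⟩ := hcond i
      have ht1 : 1 ≤ t := by
        rcases Nat.eq_zero_or_pos t with h0 | h0
        · rw [h0, Nat.mul_zero] at ht; omega
        · exact h0
      have hEit : E i = t - 1 := by
        rw [hEi' i, ht, Nat.mul_div_cancel_left t hp0]
      have hcastE : (E i : ℤ) = (t : ℤ) - 1 := by
        rw [hEit, Nat.cast_sub ht1, Nat.cast_one]
      have hcastD : (D i : ℤ) + 1 = (p : ℤ) * (t : ℤ) := by exact_mod_cast congrArg (Nat.cast : ℕ → ℤ) ht
      rw [hcastE, mul_sub, ← hcastD]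
      ring
    have hsum : (p : ℤ) * wdeg w E j = wdeg w D j + (1 - (p : ℤ)) * ∑ i, w i j := by
      have e1 : (p : ℤ) * wdeg w E j = ∑ i, ((D i : ℤ) + 1 - (p : ℤ)) * w i j := by
        rw [wdeg_def, Finset.mul_sum]
        exact Finset.sum_congr rfl fun i _ => by rw [← mul_assoc, hEi i]
      rw [e1, wdeg_def, Finset.mul_sum, ← Finset.sum_add_distrib]
      exact Finset.sum_congr rfl fun i _ => by ring
    have hD2 : wdeg w D j = ((p : ℤ) - 1) * (∑ i, w i j) + wdeg w d j := by
      rw [← hud, wdeg_add, hfpow (p - 1) u hu j, hδ j, hcast]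
    linear_combination hsum + hD2
  refine ⟨?_, ?_⟩
  -- PART 1
  · intro d c hne
    have hne' : (φ (monomial d c)).support.Nonempty := by
      rw [Finset.nonempty_iff_ne_empty]
      intro hc
      exact hne (support_eq_empty.mp hc)
    obtain ⟨E₀, hE₀⟩ := hne'
    constructor
    · intro j
      exact ⟨wdeg w E₀ j, (keyStep d c E₀ hE₀ j).symm⟩
    · intro E hE j
      rw [← keyStep d c E hE j, Int.mul_ediv_cancel_left _ hpz]
  -- PART 2
  · intro I hI g hg μ
    have φ0 : φ 0 = 0 := by
      have h := hadd 0 0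
      rw [add_zero] at h
      exact add_eq_left.mp h.symm
    have φsum : ∀ (s : Finset (Fin n →₀ ℕ)) (F : (Fin n →₀ ℕ) → MvPolynomial (Fin n) k),
        φ (∑ i ∈ s, F i) = ∑ i ∈ s, φ (F i) := by
      intro s F
      induction s using Finset.cons_induction with
      | empty => simpa using φ0
      | cons a s ha ih => rw [Finset.sum_cons, Finset.sum_cons, hadd, ih]
    have iterAdd : ∀ (e : ℕ) (a b : MvPolynomial (Fin n) k),
        φ^[e] (a + b) = φ^[e] a + φ^[e] b := by
      intro e
      induction e with
      | zero => intro a b; simp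
      | succ e ih =>
        intro a b
        rw [Function.iterate_succ_apply, Function.iterate_succ_apply,
          Function.iterate_succ_apply, hadd, ih]
    have iterOne : ∀ e : ℕ, φ^[e] (1 : MvPolynomial (Fin n) k) = 1 := by
      intro e
      induction e with
      | zero => simp
      | succ e ih => rw [Function.iterate_succ_apply, hone, ih]
    have iterMem : ∀ (e : ℕ) (z : MvPolynomial (Fin n) k), z ∈ I → φ^[e] z ∈ I := by
      intro e
      induction e with
      | zero => intro z hz; simpa using hz
      | succ e ih =>
        intro z hz
        rw [Function.iterate_succ_apply]
        exact ih _ (hI z hz)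
    have iterPow : ∀ (e : ℕ) (A b : MvPolynomial (Fin n) k),
        φ^[e] (A ^ p ^ e * b) = A * φ^[e] b := by
      intro e
      induction e with
      | zero => intro A b; simp
      | succ e ih =>
        intro A b
        have h1 : A ^ p ^ (e + 1) * b = (A ^ p ^ e) ^ p * b := by
          rw [← pow_mul, ← pow_succ]
        rw [Function.iterate_succ_apply, h1, hsemi, ih, ← Function.iterate_succ_apply]
    have kill : ∀ (e : ℕ) (z : MvPolynomial (Fin n) k),
        (∀ D ∈ z.support, ∃ j, ¬ ((p : ℤ) ^ e ∣ wdeg w D j)) → φ^[e] z = 0 := by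
      intro e
      induction e with
      | zero =>
        intro z hz
        have hsupp : z.support = ∅ := by
          apply Finset.eq_empty_of_forall_notMem
          intro D hD
          obtain ⟨j, hj⟩ := hz D hD
          exact hj (by simp)
        rw [Function.iterate_zero_apply]
        exact support_eq_empty.mp hsupp
      | succ e ih =>
        intro z hz
        rw [Function.iterate_succ_apply]
        apply ih
        intro D' hD'
        have hφz : φ z = ∑ D ∈ z.support, φ (monomial D (coeff D z)) := by
          conv_lhs => rw [← support_sum_monomial_coeff z]
          exact φsum _ _
        rw [hφz, mem_support_iff, coeff_sum] at hD'
        obtain ⟨D, hD, hne⟩ := Finset.exists_ne_zero_of_sum_ne_zero hD'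
        obtain ⟨j, hj⟩ := hz D hD
        refine ⟨j, fun hdvd => hj ?_⟩
        have hkey := keyStep D (coeff D z) D' (mem_support_iff.mpr hne) j
        rw [← hkey, pow_succ']
        exact mul_dvd_mul_left _ hdvd
    -- main extraction argument
    have main : ∀ (h q : MvPolynomial (Fin n) k),
        (∀ A ∈ h.support, ∀ j, wdeg w A j = μ j) →
        (∀ B ∈ q.support, wdeg w B ≠ μ) →
        h + q = g → h ∈ I := by
      intro h q hh hq heq
      have hHpow : ∀ (m : ℕ), ∀ A ∈ (h ^ m).support, ∀ j, wdeg w A j = (m : ℤ) * μ j := by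
        intro m
        induction m with
        | zero =>
          intro A hA j
          rw [pow_zero] at hA
          rw [support_one A hA]
          simp [wdeg]
        | succ m ih =>
          intro A hA j
          rw [pow_succ] at hA
          obtain ⟨a, ha, b, hb, hab⟩ := Finset.mem_add.mp (support_mul _ _ hA)
          rw [← hab, wdeg_add, ih a ha j, hh b hb j]
          push_cast
          ring
      set N : ℕ := q.support.sup
        (fun B => Finset.univ.sup (fun j => (wdeg w B j - μ j).natAbs)) with hN
      have hNlt : (N : ℤ) < (p : ℤ) ^ N := by
        have h1 : N < 2 ^ N := Nat.lt_two_pow_self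
        have h2 : 2 ^ N ≤ p ^ N := Nat.pow_le_pow_left hp2 N
        have := lt_of_lt_of_le h1 h2
        exact_mod_cast this
      have hPn1 : 1 ≤ p ^ N := Nat.one_le_pow _ _ hp0
      have hcastN : ((p ^ N - 1 : ℕ) : ℤ) = (p : ℤ) ^ N - 1 := by
        rw [Nat.cast_sub hPn1, Nat.cast_pow, Nat.cast_one]
      have hkillQ : φ^[N] (h ^ (p ^ N - 1) * q) = 0 := by
        apply kill
        intro D hD
        obtain ⟨A, hA, B, hB, hAB⟩ := Finset.mem_add.mp (support_mul _ _ hD)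
        have hBne := hq B hB
        have hjex : ∃ j, wdeg w B j ≠ μ j := by
          by_contra hcon
          push_neg at hcon
          exact hBne (funext hcon)
        obtain ⟨j, hj⟩ := hjex
        refine ⟨j, fun hdvd => ?_⟩
        have hDj : wdeg w D j = (p : ℤ) ^ N * μ j + (wdeg w B j - μ j) := by
          rw [← hAB, wdeg_add, hHpow _ A hA j, hcastN]
          ring
        have hzdvd : (p : ℤ) ^ N ∣ wdeg w B j - μ j := by
          have h2 : (p : ℤ) ^ N ∣ (p : ℤ) ^ N * μ j := dvd_mul_right _ _
          have h3 := dvd_sub hdvd h2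
          rwa [hDj, add_sub_cancel_left] at h3
        have hzne : wdeg w B j - μ j ≠ 0 := sub_ne_zero.mpr hj
        have hle := Int.le_of_dvd (abs_pos.mpr hzne) ((dvd_abs _ _).mpr hzdvd)
        have hb1 : (wdeg w B j - μ j).natAbs ≤
            Finset.univ.sup (fun j => (wdeg w B j - μ j).natAbs) :=
          Finset.le_sup (f := fun j' => (wdeg w B j' - μ j').natAbs) (Finset.mem_univ j)
        have hbound : (wdeg w B j - μ j).natAbs ≤ N :=
          le_trans hb1 (Finset.le_sup
            (f := fun B => Finset.univ.sup (fun j => (wdeg w B j - μ j).natAbs)) hB)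
        rw [Int.abs_eq_natAbs] at hle
        have hb2 : (((wdeg w B j - μ j).natAbs : ℤ)) ≤ (N : ℤ) := by exact_mod_cast hbound
        linarith
      have hmain : φ^[N] (h ^ (p ^ N - 1) * g) = h := by
        rw [← heq, mul_add, iterAdd, hkillQ, add_zero]
        have hpow1 : h ^ (p ^ N - 1) * h = h ^ p ^ N * 1 := by
          rw [mul_one, ← pow_succ]
          congr 1
          omega
        rw [hpow1, iterPow, iterOne, mul_one]
      have hmem : h ^ (p ^ N - 1) * g ∈ I := Ideal.mul_mem_left I _ hg
      have hfin := iterMem N _ hmem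
      rwa [hmain] at hfin
    refine main _ (∑ d ∈ g.support, if wdeg w d = μ then 0 else monomial d (g.coeff d))
      ?_ ?_ ?_
    · intro A hA j
      rw [mem_support_iff, coeff_sum] at hA
      obtain ⟨d, hd, hne⟩ := Finset.exists_ne_zero_of_sum_ne_zero hA
      obtain ⟨hc, h2⟩ := ite_ne _ _ _ _ hne
      have hd2 := mono_ne _ _ _ h2
      exact congrFun (hd2 ▸ hc) j
    · intro B hB
      rw [mem_support_iff, coeff_sum] at hB
      obtain ⟨d, hd, hne⟩ := Finset.exists_ne_zero_of_sum_ne_zero hB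
      obtain ⟨hc, h2⟩ := ite_ne' _ _ _ _ hne
      have hd2 := mono_ne _ _ _ h2
      exact hd2 ▸ hc
    · rw [← Finset.sum_add_distrib]
      have hterm : ∀ d ∈ g.support,
          ((if wdeg w d = μ then monomial d (g.coeff d) else 0) +
            (if wdeg w d = μ then 0 else monomial d (g.coeff d))) = monomial d (g.coeff d) := by
        intro d _
        split <;> simp
      rw [Finset.sum_congr rfl hterm, support_sum_monomial_coeff]
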